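/- Let μ be a probability measure on ℝ supported in [−C, C] and Λ > 1. Define F(w) = (∫ y dμ + (Λ²−1)·∫ y·w dμ)/(1 + (Λ²−1)·∫ w dμ) for measurable w : ℝ → [0,1]. Then sup over all measurable w : ℝ → [0,1] of F(w) equals the sup of F(w) over nondecreasing measurable w : ℝ → [0,1]. -/

import Mathlib

open MeasureTheory

lemma stmt4_int {μ : Measure ℝ} [IsProbabilityMeasure μ] {C : ℝ} (hC : 0 < C)
    (hsupp : ∀ᵐ y ∂μ, y ∈ Set.Icc (-C) C) {w : ℝ → ℝ} (hw : Measurable w)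
    (hb : ∀ y, w y ∈ Set.Icc (0:ℝ) 1) :
    Integrable w μ ∧ Integrable (fun y => y * w y) μ := by
  constructor
  · apply Integrable.mono' (integrable_const 1) hw.aestronglyMeasurable
    filter_upwards with y
    rw [Real.norm_eq_abs, abs_le]
    exact ⟨by linarith [(hb y).1], (hb y).2⟩
  · apply Integrable.mono' (integrable_const C) (measurable_id.mul hw).aestronglyMeasurable
    filter_upwards [hsupp] with y hy
    rw [Real.norm_eq_abs, Pi.mul_apply, id_eq, abs_mul]
    calc |y| * |w y| ≤ C * 1 := by
          apply mul_le_mul _ _ (abs_nonneg _) hC.le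
          · rw [abs_le]; exact ⟨hy.1, hy.2⟩
          · rw [abs_le]; exact ⟨by linarith [(hb y).1], (hb y).2⟩
      _ = C := mul_one C

/-- The supremum of `F(w)` over measurable `w : ℝ → [0,1]` equals the supremum over
nondecreasing measurable `w : ℝ → [0,1]`. -/
theorem stmt_4 (μ : Measure ℝ) [IsProbabilityMeasure μ] (C : ℝ) (hC : 0 < C)
    (hsupp : ∀ᵐ y ∂μ, y ∈ Set.Icc (-C) C) (Λ : ℝ) (hΛ : 1 < Λ) :
    sSup {x : ℝ | ∃ w : ℝ → ℝ, Measurable w ∧ (∀ y, w y ∈ Set.Icc (0:ℝ) 1) ∧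
        x = (∫ y, y ∂μ + (Λ ^ 2 - 1) * ∫ y, y * w y ∂μ) /
              (1 + (Λ ^ 2 - 1) * ∫ y, w y ∂μ)}
    = sSup {x : ℝ | ∃ w : ℝ → ℝ, Measurable w ∧ (∀ y, w y ∈ Set.Icc (0:ℝ) 1) ∧
        Monotone w ∧
        x = (∫ y, y ∂μ + (Λ ^ 2 - 1) * ∫ y, y * w y ∂μ) /
              (1 + (Λ ^ 2 - 1) * ∫ y, w y ∂μ)} := by
  set c := Λ ^ 2 - 1 with hc_def
  have hc : 0 < c := by nlinarith
  set A := {x : ℝ | ∃ w : ℝ → ℝ, Measurable w ∧ (∀ y, w y ∈ Set.Icc (0:ℝ) 1) ∧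
        x = (∫ y, y ∂μ + c * ∫ y, y * w y ∂μ) / (1 + c * ∫ y, w y ∂μ)} with hA
  set B := {x : ℝ | ∃ w : ℝ → ℝ, Measurable w ∧ (∀ y, w y ∈ Set.Icc (0:ℝ) 1) ∧
        Monotone w ∧
        x = (∫ y, y ∂μ + c * ∫ y, y * w y ∂μ) / (1 + c * ∫ y, w y ∂μ)} with hB
  have hint_y : Integrable (fun y : ℝ => y) μ := by
    apply Integrable.mono' (integrable_const C) measurable_id.aestronglyMeasurable
    filter_upwards [hsupp] with y hy
    rw [Real.norm_eq_abs, abs_le]; exact ⟨hy.1, hy.2⟩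
  -- B ⊆ A
  have hBA : B ⊆ A := by
    rintro x ⟨w, hw, hb, _, hx⟩
    exact ⟨w, hw, hb, hx⟩
  -- positivity of denominators
  have hD : ∀ {w : ℝ → ℝ}, Measurable w → (∀ y, w y ∈ Set.Icc (0:ℝ) 1) →
      0 < 1 + c * ∫ y, w y ∂μ := by
    intro w hw hb
    have : 0 ≤ ∫ y, w y ∂μ := integral_nonneg fun y => (hb y).1
    nlinarith
  -- A bounded above by C
  have hAbdd : ∀ x ∈ A, x ≤ C := by
    rintro x ⟨w, hw, hb, hx⟩
    obtain ⟨hiw, hiyw⟩ := stmt4_int hC hsupp hw hb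
    have h1 : ∫ y, y ∂μ ≤ C := by
      calc ∫ y, y ∂μ ≤ ∫ _, C ∂μ := by
            apply integral_mono_ae hint_y (integrable_const C)
            filter_upwards [hsupp] with y hy using hy.2
        _ = C := by simp
    have h2 : ∫ y, y * w y ∂μ ≤ C * ∫ y, w y ∂μ := by
      rw [← integral_const_mul]
      apply integral_mono_ae hiyw (hiw.const_mul C)
      filter_upwards [hsupp] with y hy
      exact mul_le_mul_of_nonneg_right hy.2 (hb y).1
    rw [hx, div_le_iff₀ (hD hw hb)]
    nlinarith [integral_nonneg (μ := μ) (f := w) fun y => (hb y).1]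
  have hABddAbove : BddAbove A := ⟨C, hAbdd⟩
  have hBBddAbove : BddAbove B := hABddAbove.mono hBA
  have hBne : B.Nonempty := by
    refine ⟨(∫ y, y ∂μ + c * ∫ y, y * (0:ℝ) ∂μ) / (1 + c * ∫ _, (0:ℝ) ∂μ),
      fun _ => 0, measurable_const, fun y => ⟨le_refl 0, zero_le_one⟩, monotone_const, ?_⟩
    simp
  apply le_antisymm
  · apply csSup_le (hBne.mono hBA)
    rintro x ⟨w, hw, hb, hx⟩
    obtain ⟨hiw, hiyw⟩ := stmt4_int hC hsupp hw hb
    set a := x with ha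
    set w' : ℝ → ℝ := fun y => if a < y then 1 else 0 with hw'def
    have hw'meas : Measurable w' := Measurable.ite measurableSet_Ioi measurable_const measurable_const
    have hw'b : ∀ y, w' y ∈ Set.Icc (0:ℝ) 1 := by
      intro y; dsimp [w']; split_ifs <;> simp
    have hw'mono : Monotone w' := by
      intro y z hyz; dsimp [w']
      split_ifs with h1 h2 h2 <;> try norm_num
      exact absurd (lt_of_lt_of_le h1 hyz) h2
    obtain ⟨hiw', hiyw'⟩ := stmt4_int hC hsupp hw'meas hw'b
    have hDw := hD hw hb
    have hDw' := hD hw'meas hw'b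
    -- key integral inequality
    have hkey : ∫ y, y * w y ∂μ - a * ∫ y, w y ∂μ ≤
        ∫ y, y * w' y ∂μ - a * ∫ y, w' y ∂μ := by
      rw [← integral_const_mul, ← integral_const_mul, ← integral_sub hiyw (hiw.const_mul a),
        ← integral_sub hiyw' (hiw'.const_mul a)]
      apply integral_mono (hiyw.sub (hiw.const_mul a)) (hiyw'.sub (hiw'.const_mul a))
      intro y
      simp only [Pi.sub_apply]
      have : y * w y - a * w y = (y - a) * w y := by ring
      rw [this]
      have : y * w' y - a * w' y = (y - a) * w' y := by ring
      rw [this]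
      dsimp [w']
      split_ifs with h
      · rw [mul_one]
        calc (y - a) * w y ≤ (y - a) * 1 :=
            mul_le_mul_of_nonneg_left (hb y).2 (by linarith)
          _ = y - a := mul_one _
      · rw [mul_zero]
        push_neg at h
        exact mul_nonpos_of_nonpos_of_nonneg (by linarith) (hb y).1
    have haD : a * (1 + c * ∫ y, w y ∂μ) = ∫ y, y ∂μ + c * ∫ y, y * w y ∂μ :=
      (eq_div_iff hDw.ne').mp hx
    have hle : a ≤ (∫ y, y ∂μ + c * ∫ y, y * w' y ∂μ) / (1 + c * ∫ y, w' y ∂μ) := by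
      rw [le_div_iff₀ hDw']
      nlinarith
    exact hle.trans (le_csSup hBBddAbove ⟨w', hw'meas, hw'b, hw'mono, rfl⟩)
  · exact csSup_le_csSup hABddAbove hBne hBA
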